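/- For a symmetric 2×2 real matrix A and B = [[0,−1],[1,0]], the 4×4 block matrix [[A,−B],[B,A]] is positive semidefinite if and only if A is positive semidefinite and det(A) ≥ 1. -/

import Mathlib

theorem block_psd_iff_psd_and_det_ge_one
    (A : Matrix (Fin 2) (Fin 2) ℝ) (hA : A.IsSymm)
    (B : Matrix (Fin 2) (Fin 2) ℝ) (hB : B = !![0, -1; 1, 0]) :
    (Matrix.fromBlocks A (-B) B A).PosSemidef ↔ A.PosSemidef ∧ 1 ≤ A.det := by
  subst hB
  have hba : A 1 0 = A 0 1 := by
    have := hA.apply 0 1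
    simpa using this
  have hdet : A.det = A 0 0 * A 1 1 - A 0 1 * A 1 0 := by
    simp [Matrix.det_fin_two]
  have hQ : ∀ v : Fin 2 ⊕ Fin 2 → ℝ,
      dotProduct (star v) (Matrix.mulVec (Matrix.fromBlocks A (-!![0, -1; 1, 0]) !![0, -1; 1, 0] A) v)
      = A 0 0 * v (Sum.inl 0) ^ 2 + 2 * A 0 1 * v (Sum.inl 0) * v (Sum.inl 1)
        + A 1 1 * v (Sum.inl 1) ^ 2
        + A 0 0 * v (Sum.inr 0) ^ 2 + 2 * A 0 1 * v (Sum.inr 0) * v (Sum.inr 1)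
        + A 1 1 * v (Sum.inr 1) ^ 2
        + 2 * (v (Sum.inl 0) * v (Sum.inr 1) - v (Sum.inl 1) * v (Sum.inr 0)) := by
    intro v
    rw [← Sum.elim_comp_inl_inr v]
    simp [Matrix.fromBlocks_mulVec, sumElim_dotProduct_sumElim, Matrix.mulVec,
      dotProduct, Fin.sum_univ_succ, hba]
    ring
  rw [Matrix.posSemidef_iff_dotProduct_mulVec, Matrix.posSemidef_iff_dotProduct_mulVec]
  constructor
  · rintro ⟨-, h⟩
    set a := A 0 0; set b := A 0 1; set c := A 1 1
    have e1 := h (Sum.elim ![1, 0] 0)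
    have e2 := h (Sum.elim ![0, 1] 0)
    have e3 := h (Sum.elim ![c, -b] ![0, -1])
    have e4 := h (Sum.elim ![b, -a] ![-1, 0])
    have e5 := h (Sum.elim ![b, -1] ![-1, 0])
    rw [hQ] at e1 e2 e3 e4 e5
    simp only [Sum.elim_inl, Sum.elim_inr, Matrix.cons_val_zero, Matrix.cons_val_one,
      Matrix.head_cons, Pi.zero_apply] at e1 e2 e3 e4 e5
    have ha : 0 ≤ a := by nlinarith
    have hc : 0 ≤ c := by nlinarith
    have hD : 1 ≤ a * c - b * b := by nlinarith [sq_nonneg b, mul_nonneg ha hc]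
    constructor
    · constructor
      · exact hA
      · intro x
        have := h (Sum.elim x 0)
        rw [hQ] at this
        simp only [Sum.elim_inl, Sum.elim_inr, Pi.zero_apply] at this
        have hx : dotProduct (star x) (Matrix.mulVec A x)
            = a * x 0 ^ 2 + 2 * b * x 0 * x 1 + c * x 1 ^ 2 := by
          simp [Matrix.mulVec, dotProduct, Fin.sum_univ_succ, hba]
          ring
        rw [hx]; nlinarith
    · rw [hdet, hba]; nlinarith
  · rintro ⟨⟨-, hpsd⟩, hd⟩
    rw [hdet, hba] at hd
    set a := A 0 0; set b := A 0 1; set c := A 1 1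
    have ha : 0 ≤ a := by
      have := hpsd ![1, 0]
      simpa [Matrix.mulVec, dotProduct, Fin.sum_univ_succ] using this
    have hc : 0 ≤ c := by
      have := hpsd ![0, 1]
      simpa [Matrix.mulVec, dotProduct, Fin.sum_univ_succ] using this
    have ha' : 0 < a := by nlinarith [sq_nonneg b]
    constructor
    · rw [Matrix.IsHermitian, Matrix.conjTranspose_eq_transpose_of_trivial]
      ext i j
      rcases i with i | i <;> rcases j with j | j <;> fin_cases i <;> fin_cases j <;>
        simp [Matrix.fromBlocks, hba] <;> rfl
    · intro v
      rw [hQ]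
      set x0 := v (Sum.inl 0); set x1 := v (Sum.inl 1)
      set y0 := v (Sum.inr 0); set y1 := v (Sum.inr 1)
      nlinarith [sq_nonneg (a * x0 + b * x1 + y1), sq_nonneg (a * y0 + b * y1 - x1),
        sq_nonneg x1, sq_nonneg y1,
        mul_nonneg (sub_nonneg.2 hd) (sq_nonneg x1),
        mul_nonneg (sub_nonneg.2 hd) (sq_nonneg y1)]
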